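/- Let s ≥ 1 be an integer, c_1 < … < c_s be s distinct real numbers, and (A, b) the coefficients of the associated Runge–Kutta collocation method. Assume the method is A-stable and that the polynomial τ(π) has no root in the closed left half-plane ℂ⁻ = {z ∈ ℂ : Re(z) ≤ 0}. Then the method is Â-stable, i.e. it is A-stable, AS-stable and ASI-stable. -/

import Mathlib

open Polynomial Matrix MeasureTheory

noncomputable section

/-- Lagrange basis function `ℓ_i(t) = ∏_{j≠i} (t - c_j)/(c_i - c_j)`. -/
def lagrangeFun (s : ℕ) (c : Fin s → ℝ) (i : Fin s) (t : ℝ) : ℝ :=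
  ∏ j ∈ Finset.univ.erase i, (t - c j) / (c i - c j)

/-- Coefficient matrix `A` of the collocation method: `a_{ij} = ∫_0^{c_i} ℓ_j`. -/
def collocA (s : ℕ) (c : Fin s → ℝ) : Matrix (Fin s) (Fin s) ℝ :=
  Matrix.of fun i j => ∫ t in (0:ℝ)..(c i), lagrangeFun s c j t

/-- Weight vector `b` of the collocation method: `b_i = ∫_0^1 ℓ_i`. -/
def collocB (s : ℕ) (c : Fin s → ℝ) : Fin s → ℝ :=
  fun i => ∫ t in (0:ℝ)..(1:ℝ), lagrangeFun s c i t

/-- `π = ∏ (X - c_i)`. -/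
def piPoly (s : ℕ) (c : Fin s → ℝ) : Polynomial ℝ :=
  ∏ i : Fin s, (Polynomial.X - Polynomial.C (c i))

/-- The linear map `τ` sending `Σ a_k X^k` to `Σ k! a_k X^k`. -/
def tauP (p : Polynomial ℝ) : Polynomial ℝ :=
  ∑ k ∈ p.support, Polynomial.C ((k.factorial : ℝ) * p.coeff k) * Polynomial.X ^ k

/-- The matrix `A` viewed as a complex matrix. -/
def collocAC (s : ℕ) (c : Fin s → ℝ) : Matrix (Fin s) (Fin s) ℂ :=
  (collocA s c).map (fun x => (x : ℂ))

/-- The weight vector `b` viewed as a complex vector. -/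
def collocBC (s : ℕ) (c : Fin s → ℝ) : Fin s → ℂ :=
  fun i => (collocB s c i : ℂ)

/-- The linear stability function `R(λ) = 1 + λ bᵀ (I - λ A)⁻¹ 𝟙`. -/
def stabR (s : ℕ) (c : Fin s → ℝ) (lam : ℂ) : ℂ :=
  1 + lam * (collocBC s c ⬝ᵥ ((1 - lam • collocAC s c)⁻¹ *ᵥ (fun _ => 1)))

/-- A-stability: `|R(λ)| ≤ 1` on the closed left half-plane (where defined). -/
def AStable (s : ℕ) (c : Fin s → ℝ) : Prop :=
  ∀ lam : ℂ, lam.re ≤ 0 → IsUnit (1 - lam • collocAC s c).det →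
    ‖stabR s c lam‖ ≤ 1

/-- I-stability: `|R(λ)| ≤ 1` on the imaginary axis (where defined). -/
def IStable (s : ℕ) (c : Fin s → ℝ) : Prop :=
  ∀ lam : ℂ, lam.re = 0 → IsUnit (1 - lam • collocAC s c).det →
    ‖stabR s c lam‖ ≤ 1

/-- AS-stability: `I - λA` invertible on `ℂ⁻` and `λ bᵀ (I - λA)⁻¹` uniformly bounded there. -/
def ASStable (s : ℕ) (c : Fin s → ℝ) : Prop :=
  (∀ lam : ℂ, lam.re ≤ 0 → IsUnit (1 - lam • collocAC s c).det) ∧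
  ∃ M : ℝ, ∀ lam : ℂ, lam.re ≤ 0 → ∀ j,
    ‖lam * (collocBC s c ᵥ* (1 - lam • collocAC s c)⁻¹) j‖ ≤ M

/-- ASI-stability: `I - λA` invertible on `ℂ⁻` and `(I - λA)⁻¹` uniformly bounded there. -/
def ASIStable (s : ℕ) (c : Fin s → ℝ) : Prop :=
  (∀ lam : ℂ, lam.re ≤ 0 → IsUnit (1 - lam • collocAC s c).det) ∧
  ∃ M : ℝ, ∀ lam : ℂ, lam.re ≤ 0 → ∀ i j,
    ‖(1 - lam • collocAC s c)⁻¹ i j‖ ≤ M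

/-- IS-stability: `I - λA` invertible on `iℝ` and `λ bᵀ (I - λA)⁻¹` uniformly bounded there. -/
def ISStable (s : ℕ) (c : Fin s → ℝ) : Prop :=
  (∀ lam : ℂ, lam.re = 0 → IsUnit (1 - lam • collocAC s c).det) ∧
  ∃ M : ℝ, ∀ lam : ℂ, lam.re = 0 → ∀ j,
    ‖lam * (collocBC s c ᵥ* (1 - lam • collocAC s c)⁻¹) j‖ ≤ M

/-- ISI-stability: `I - λA` invertible on `iℝ` and `(I - λA)⁻¹` uniformly bounded there. -/
def ISIStable (s : ℕ) (c : Fin s → ℝ) : Prop :=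
  (∀ lam : ℂ, lam.re = 0 → IsUnit (1 - lam • collocAC s c).det) ∧
  ∃ M : ℝ, ∀ lam : ℂ, lam.re = 0 → ∀ i j,
    ‖(1 - lam • collocAC s c)⁻¹ i j‖ ≤ M

end

noncomputable section

def compM (n : ℕ) (f : Fin n → ℂ) : Matrix (Fin n) (Fin n) ℂ :=
  Matrix.of fun i j => (if (j : ℕ) = n - 1 then -f i else 0) +
    (if (i : ℕ) = (j : ℕ) + 1 then 1 else 0)

lemma compM_ent (n : ℕ) (f : Fin n → ℂ) (μ : ℂ) (i j : Fin n) :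
    (μ • (1 : Matrix (Fin n) (Fin n) ℂ) - compM n f) i j =
      (if i = j then μ else 0) - (if (j : ℕ) = n - 1 then -f i else 0) -
        (if (i : ℕ) = (j : ℕ) + 1 then 1 else 0) := by
  simp only [Matrix.sub_apply, Matrix.smul_apply, Matrix.one_apply, compM, Matrix.of_apply,
    smul_eq_mul, mul_ite, mul_one, mul_zero, sub_add_eq_sub_sub]

theorem det_compM (n : ℕ) : ∀ (f : Fin n → ℂ) (μ : ℂ),
    (μ • (1 : Matrix (Fin n) (Fin n) ℂ) - compM n f).det =
      μ ^ n + ∑ i : Fin n, f i * μ ^ (i : ℕ) := by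
  induction n with
  | zero => intro f μ; simp [Matrix.det_fin_zero]
  | succ m ih =>
    match m, ih with
    | 0, _ =>
      intro f μ
      rw [Matrix.det_fin_one, compM_ent]
      simp
    | Nat.succ k, ih =>
      intro f μ
      set M := μ • (1 : Matrix (Fin (k+2)) (Fin (k+2)) ℂ) - compM (k+2) f with hM
      have hent : ∀ i j, M i j = (if i = j then μ else 0)
          - (if (j : ℕ) = k + 2 - 1 then -f i else 0)
          - (if (i : ℕ) = (j : ℕ) + 1 then 1 else 0) := fun i j => compM_ent (k+2) f μ i j
      have hsub0 : M.submatrix (Fin.succAbove 0) Fin.succ =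
          μ • (1 : Matrix (Fin (k+1)) (Fin (k+1)) ℂ) - compM (k+1) (f ∘ Fin.succ) := by
        ext i j
        rw [Fin.succAbove_zero, Matrix.submatrix_apply, hent, compM_ent]
        simp only [Fin.val_succ, Fin.ext_iff, Function.comp_apply]
        split_ifs <;> first | rfl | omega
      -- the (1,0) minor
      have hminor1 : (M.submatrix ((1 : Fin (k+2)).succAbove) Fin.succ).det = f 0 := by
        set S := M.submatrix ((1 : Fin (k+2)).succAbove) Fin.succ with hS
        have hrow0 : ∀ j : Fin (k+1), S 0 j = if (j : ℕ) = k then f 0 else 0 := by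
          intro j
          have h0 : (1 : Fin (k+2)).succAbove 0 = 0 := by
            rw [Fin.succAbove_of_castSucc_lt]
            · rfl
            · simp [Fin.lt_def]
          rw [hS, Matrix.submatrix_apply, h0, hent]
          simp only [Fin.val_succ, Fin.val_zero, Fin.ext_iff]
          split_ifs <;> first | (exfalso; omega) | simp_all | simp
        have hinner : ∀ (i j : Fin k),
            (S.submatrix Fin.succ (Fin.last k).succAbove) i j =
              (if (j : ℕ) = (i : ℕ) + 1 then μ else 0) - (if i = j then 1 else 0) := by
          intro i j
          have hrow : (1 : Fin (k+2)).succAbove i.succ = i.succ.succ := by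
            rw [Fin.succAbove_of_le_castSucc]
            simp [Fin.le_def]
          rw [Matrix.submatrix_apply, Fin.succAbove_last, hS, Matrix.submatrix_apply, hrow,
            hent]
          simp only [Fin.val_succ, Fin.ext_iff, Fin.coe_castSucc]
          have hj : (j : ℕ) < k := j.isLt
          split_ifs <;> first | (exfalso; omega) | simp_all | simp
        rw [Matrix.det_succ_row_zero]
        rw [Finset.sum_eq_single (Fin.last k)]
        · rw [hrow0]
          simp only [Fin.val_last, if_pos rfl]
          have hdet : (S.submatrix Fin.succ (Fin.last k).succAbove).det = (-1 : ℂ) ^ k := by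
            have htri : (S.submatrix Fin.succ (Fin.last k).succAbove).BlockTriangular id := by
              intro i j hij
              rw [hinner]
              have : ¬ i = j := by intro h; subst h; exact lt_irrefl _ hij
              have : ¬ ((j : ℕ) = (i : ℕ) + 1) := by
                simp only [id] at hij
                have := Fin.lt_def.mp hij
                omega
              simp_all
            rw [Matrix.det_of_upperTriangular htri]
            have : ∀ i : Fin k, (S.submatrix Fin.succ (Fin.last k).succAbove) i i = -1 := by
              intro i; rw [hinner]; simp
            rw [Finset.prod_congr rfl (fun i _ => this i)]
            simp
          rw [hdet, if_pos trivial, mul_comm, ← mul_assoc, ← pow_add, ← two_mul, pow_mul]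
          norm_num
        · intro j _ hj
          rw [hrow0]
          have : ¬ ((j : ℕ) = k) := by
            intro h; apply hj; apply Fin.ext; simpa using h
          simp [this]
        · intro h; exact absurd (Finset.mem_univ _) h
      -- main expansion
      rw [Matrix.det_succ_column_zero, Fin.sum_univ_succ, Fin.sum_univ_succ]
      have h00 : M 0 0 = μ := by rw [hent]; simp
      have h10 : M ((0 : Fin (k+1)).succ) 0 = -1 := by
        rw [hent]
        have h1 : (((0 : Fin (k+1)).succ : Fin (k+2)) : ℕ) = 1 := rfl
        have h2 : ¬ ((0 : Fin (k+1)).succ = (0 : Fin (k+2))) := Fin.succ_ne_zero _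
        rw [if_neg h2]
        simp [h1]
      have htail : ∀ i : Fin k, M ((i.succ).succ) 0 = 0 := by
        intro i
        rw [hent]
        have h2 : ¬ ((i.succ).succ = (0 : Fin (k+2))) := Fin.succ_ne_zero _
        rw [if_neg h2]
        simp [Fin.val_succ]
      rw [h00, h10, hsub0, ih (f ∘ Fin.succ) μ]
      have hz : ∑ i : Fin k, (-1 : ℂ) ^ ((i.succ.succ : Fin (k+2)) : ℕ) * M i.succ.succ 0 *
          (M.submatrix (i.succ.succ).succAbove Fin.succ).det = 0 := by
        apply Finset.sum_eq_zero
        intro i _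
        rw [htail i]
        ring
      rw [hz]
      have hone : (0 : Fin (k+1)).succ = (1 : Fin (k+2)) := rfl
      rw [hone, hminor1]
      rw [Fin.sum_univ_succ (f := fun i : Fin (k+2) => f i * μ ^ (i : ℕ))]
      simp only [Fin.val_zero, pow_zero, mul_one, Fin.val_succ, Function.comp_apply,
        Fin.val_one, pow_one]
      have hsum : μ * ∑ x : Fin (k+1), f x.succ * μ ^ (x : ℕ)
          = ∑ x : Fin (k+1), f x.succ * μ ^ ((x : ℕ) + 1) := by
        rw [Finset.mul_sum]
        exact Finset.sum_congr rfl fun i _ => by ring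
      simp only [Nat.succ_eq_add_one] at *
      rw [one_mul, mul_add, hsum]
      ring

section lemmas

variable {s : ℕ} {c : Fin s → ℝ}

lemma lagrangeFun_continuous (i : Fin s) : Continuous (lagrangeFun s c i) := by
  unfold lagrangeFun
  apply continuous_finset_prod
  intro j _
  exact (continuous_id.sub continuous_const).div_const _

lemma lagrangeFun_eq_basis (hc : StrictMono c) (i : Fin s) (t : ℝ) :
    lagrangeFun s c i t = (Lagrange.basis Finset.univ c i).eval t := by
  rw [Lagrange.basis, eval_prod, lagrangeFun]
  refine Finset.prod_congr rfl fun j hj => ?_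
  have hij : c i ≠ c j := by
    intro h
    exact (Finset.mem_erase.mp hj).1 (hc.injective h.symm)
  rw [Lagrange.basisDivisor, eval_mul, eval_C, eval_sub, eval_X, eval_C, div_eq_inv_mul]

lemma sum_pow_mul_lagrange (hc : StrictMono c) {k : ℕ} (hk : k < s) (t : ℝ) :
    ∑ j : Fin s, (c j) ^ k * lagrangeFun s c j t = t ^ k := by
  have hvs : Set.InjOn c (Finset.univ : Finset (Fin s)) := fun a _ b _ h => hc.injective h
  have hdeg : ((X : ℝ[X]) ^ k).degree < (Finset.univ : Finset (Fin s)).card := by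
    rw [degree_X_pow]
    simp only [Finset.card_univ, Fintype.card_fin]
    exact_mod_cast hk
  have h := Lagrange.eq_interpolate hvs hdeg
  have h2 := congrArg (eval t) h
  rw [Lagrange.interpolate_apply, eval_pow, eval_X, eval_finset_sum] at h2
  rw [h2]
  refine Finset.sum_congr rfl fun j _ => ?_
  rw [eval_mul, eval_C, eval_pow, eval_X, lagrangeFun_eq_basis hc]

lemma collocA_row (hc : StrictMono c) (i : Fin s) {k : ℕ} (hk : k < s) :
    ∑ j : Fin s, collocA s c i j * (c j) ^ k = (c i) ^ (k + 1) / (k + 1) := by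
  have hInt : ∀ j : Fin s, IntervalIntegrable (fun t => lagrangeFun s c j t * (c j) ^ k)
      volume 0 (c i) :=
    fun j => ((lagrangeFun_continuous j).mul continuous_const).intervalIntegrable _ _
  have h1 : ∀ j : Fin s, collocA s c i j * (c j) ^ k
      = ∫ t in (0:ℝ)..(c i), lagrangeFun s c j t * (c j) ^ k := by
    intro j
    rw [collocA, Matrix.of_apply, ← intervalIntegral.integral_mul_const]
  rw [Finset.sum_congr rfl fun j _ => h1 j,
    ← intervalIntegral.integral_finset_sum (fun j _ => hInt j)]
  have h2 : ∀ t : ℝ, ∑ j : Fin s, lagrangeFun s c j t * (c j) ^ k = t ^ k := by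
    intro t
    rw [← sum_pow_mul_lagrange hc hk t]
    exact Finset.sum_congr rfl fun j _ => mul_comm _ _
  rw [intervalIntegral.integral_congr (fun t _ => h2 t), integral_pow]
  simp

lemma collocAC_row (hc : StrictMono c) (i : Fin s) {k : ℕ} (hk : k < s) :
    ∑ j : Fin s, collocAC s c i j * ((c j : ℂ)) ^ k
      = ((c i : ℂ)) ^ (k + 1) / ((k : ℂ) + 1) := by
  have := congrArg (fun x : ℝ => (x : ℂ)) (collocA_row hc i hk)
  push_cast at this
  rw [← this]
  rw [collocAC]
  push_cast
  rfl

end lemmas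

section poly

variable {s : ℕ} {c : Fin s → ℝ}

lemma piPoly_monic : (piPoly s c).Monic :=
  monic_prod_of_monic _ _ fun i _ => monic_X_sub_C (c i)

lemma piPoly_natDegree : (piPoly s c).natDegree = s := by
  rw [piPoly, natDegree_prod]
  · simp
  · exact fun i _ => X_sub_C_ne_zero (c i)

lemma piPoly_coeff_s : (piPoly s c).coeff s = 1 := by
  have := piPoly_monic (s := s) (c := c)
  rw [Monic, leadingCoeff, piPoly_natDegree] at this
  exact this

lemma piPoly_root (i : Fin s) :
    ∑ m ∈ Finset.range (s + 1), ((piPoly s c).coeff m : ℂ) * ((c i : ℂ)) ^ m = 0 := by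
  have h0 : (piPoly s c).eval (c i) = 0 := by
    rw [piPoly, eval_prod]
    exact Finset.prod_eq_zero (Finset.mem_univ i) (by simp)
  have h1 : (Polynomial.aeval ((c i : ℂ))) (piPoly s c) = 0 := by
    have := Polynomial.aeval_algebraMap_apply ℂ (c i) (piPoly s c)
    simp only [Polynomial.coe_aeval_eq_eval] at this ⊢
    rw [show ((c i : ℂ)) = algebraMap ℝ ℂ (c i) from rfl, this, h0, map_zero]
  rw [Polynomial.aeval_eq_sum_range' (n := s + 1) (by rw [piPoly_natDegree]; omega)] at h1
  rw [← h1]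
  exact Finset.sum_congr rfl fun m _ => by rw [Algebra.smul_def]; rfl

end poly

section simil

variable (s : ℕ) (c : Fin s → ℝ)

/-- the transfer matrix `N`. -/
def NN : Matrix (Fin s) (Fin s) ℂ :=
  Matrix.of fun m k =>
    if (k : ℕ) = s - 1 then -((piPoly s c).coeff (m : ℕ) : ℂ) / (s : ℂ)
    else if (m : ℕ) = (k : ℕ) + 1 then 1 / ((k : ℕ) + 1 : ℂ) else 0

/-- Vandermonde matrix of the nodes. -/
def VV : Matrix (Fin s) (Fin s) ℂ := Matrix.vandermonde (fun i => (c i : ℂ))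

variable {s c}

lemma VV_det_ne (hc : StrictMono c) : (VV s c).det ≠ 0 := by
  rw [VV, Matrix.det_vandermonde_ne_zero_iff]
  exact fun a b h => hc.injective (Complex.ofReal_injective h)

lemma AC_mul_VV (hs : 1 ≤ s) (hc : StrictMono c) :
    collocAC s c * VV s c = VV s c * NN s c := by
  ext i k
  rw [Matrix.mul_apply, Matrix.mul_apply]
  have hLHS : ∑ j : Fin s, collocAC s c i j * VV s c j k
      = ((c i : ℂ)) ^ ((k : ℕ) + 1) / ((k : ℕ) + 1 : ℂ) := by
    rw [← collocAC_row hc i k.isLt]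
    rfl
  rw [hLHS]
  by_cases hk : (k : ℕ) = s - 1
  · have hRHS : ∑ m : Fin s, VV s c i m * NN s c m k
        = -(1 / (s : ℂ)) * ∑ m : Fin s, ((piPoly s c).coeff (m : ℕ) : ℂ) * ((c i : ℂ)) ^ (m : ℕ) := by
      rw [Finset.mul_sum]
      refine Finset.sum_congr rfl fun m _ => ?_
      rw [NN, Matrix.of_apply, if_pos hk, VV, Matrix.vandermonde]
      simp only [Matrix.of_apply]
      ring
    rw [hRHS]
    have hfin : ∑ m : Fin s, ((piPoly s c).coeff (m : ℕ) : ℂ) * ((c i : ℂ)) ^ (m : ℕ)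
        = ∑ m ∈ Finset.range s, ((piPoly s c).coeff m : ℂ) * ((c i : ℂ)) ^ m :=
      Fin.sum_univ_eq_sum_range (fun m => ((piPoly s c).coeff m : ℂ) * ((c i : ℂ)) ^ m) s
    have hroot := piPoly_root (c := c) i
    rw [Finset.sum_range_succ, piPoly_coeff_s] at hroot
    push_cast at hroot
    have hsum : ∑ m ∈ Finset.range s, ((piPoly s c).coeff m : ℂ) * ((c i : ℂ)) ^ m
        = -((c i : ℂ)) ^ s := by
      linear_combination hroot
    rw [hfin, hsum]
    have hk1 : ((k : ℕ) : ℂ) + 1 = (s : ℂ) := by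
      have : (k : ℕ) + 1 = s := by omega
      exact_mod_cast congrArg (Nat.cast : ℕ → ℂ) this
    have hk2 : (k : ℕ) + 1 = s := by omega
    rw [hk1, hk2]
    ring
  · have hklt : (k : ℕ) + 1 < s := by have := k.isLt; omega
    rw [Finset.sum_eq_single (⟨(k : ℕ) + 1, hklt⟩ : Fin s)]
    · rw [NN, Matrix.of_apply, if_neg hk, if_pos rfl, VV, Matrix.vandermonde]
      simp only [Matrix.of_apply]
      ring
    · intro m _ hm
      rw [NN, Matrix.of_apply, if_neg hk, if_neg, mul_zero]
      intro h
      exact hm (Fin.ext h)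
    · intro h; exact absurd (Finset.mem_univ _) h

end simil

section mi

variable {s : ℕ} {c : Fin s → ℝ}

/-- scaled coefficient vector for the companion matrix -/
def gg (s : ℕ) (c : Fin s → ℝ) : Fin s → ℂ :=
  fun m => ((m : ℕ).factorial : ℂ) * ((piPoly s c).coeff (m : ℕ) : ℂ) / (s.factorial : ℂ)

lemma comp_mul_diag (hs : 1 ≤ s) :
    compM s (gg s c) * Matrix.diagonal (fun m : Fin s => (((m : ℕ).factorial : ℕ) : ℂ))
      = Matrix.diagonal (fun m : Fin s => (((m : ℕ).factorial : ℕ) : ℂ)) * NN s c := by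
  ext m k
  rw [Matrix.mul_diagonal, Matrix.diagonal_mul, compM, NN, Matrix.of_apply, Matrix.of_apply]
  have hsfac : (s : ℂ) * ((s - 1).factorial : ℂ) = (s.factorial : ℂ) := by
    exact_mod_cast congrArg (Nat.cast : ℕ → ℂ) (Nat.mul_factorial_pred (by omega))
  have hfacne : (s.factorial : ℂ) ≠ 0 := by
    exact_mod_cast Nat.cast_ne_zero.mpr (Nat.factorial_ne_zero s)
  have hsne : (s : ℂ) ≠ 0 := by
    exact_mod_cast Nat.cast_ne_zero.mpr (by omega)
  by_cases hk : (k : ℕ) = s - 1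
  · rw [if_pos hk, if_pos hk]
    have hmk : ¬ ((m : ℕ) = (k : ℕ) + 1) := by have := m.isLt; omega
    rw [if_neg hmk, add_zero, hk]
    rw [gg]
    have key : (((s - 1).factorial : ℕ) : ℂ) / (s.factorial : ℂ) = 1 / (s : ℂ) := by
      field_simp
      linear_combination hsfac
    linear_combination (-(((m : ℕ).factorial : ℂ) * ((piPoly s c).coeff (m : ℕ) : ℂ))) * key
  · rw [if_neg hk, if_neg hk, zero_add]
    by_cases hmk : (m : ℕ) = (k : ℕ) + 1
    · rw [if_pos hmk, if_pos hmk, one_mul, hmk]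
      have hkfac : (((k : ℕ) + 1).factorial : ℂ) = ((k : ℕ) + 1 : ℂ) * ((k : ℕ).factorial : ℂ) := by
        exact_mod_cast congrArg (Nat.cast : ℕ → ℂ) (Nat.factorial_succ (k : ℕ))
      rw [hkfac]
      have hne : (((k : ℕ) : ℂ) + 1) ≠ 0 := by
        have h1 : (((k : ℕ) + 1 : ℕ) : ℂ) ≠ 0 := Nat.cast_ne_zero.mpr (Nat.succ_ne_zero _)
        push_cast at h1
        exact h1
      field_simp
    · rw [if_neg hmk, if_neg hmk, zero_mul, mul_zero]

end mi

section midet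

variable {s : ℕ} {c : Fin s → ℝ}

lemma det_shift (hs : 1 ≤ s) (hc : StrictMono c) (μ : ℂ) :
    (μ • (1 : Matrix (Fin s) (Fin s) ℂ) - collocAC s c).det
      = (μ • (1 : Matrix (Fin s) (Fin s) ℂ) - NN s c).det := by
  have h : (μ • (1 : Matrix (Fin s) (Fin s) ℂ) - collocAC s c) * VV s c
      = VV s c * (μ • (1 : Matrix (Fin s) (Fin s) ℂ) - NN s c) := by
    rw [Matrix.sub_mul, Matrix.mul_sub, Matrix.smul_mul, one_mul, Matrix.mul_smul, mul_one,
      AC_mul_VV hs hc]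
  have h2 := congrArg Matrix.det h
  rw [Matrix.det_mul, Matrix.det_mul, mul_comm ((VV s c).det) _] at h2
  exact mul_right_cancel₀ (VV_det_ne hc) h2

lemma det_shift2 (hs : 1 ≤ s) (μ : ℂ) :
    (μ • (1 : Matrix (Fin s) (Fin s) ℂ) - NN s c).det
      = (μ • (1 : Matrix (Fin s) (Fin s) ℂ) - compM s (gg s c)).det := by
  set DD := Matrix.diagonal (fun m : Fin s => (((m : ℕ).factorial : ℕ) : ℂ)) with hDD
  have hdet : DD.det ≠ 0 := by
    rw [hDD, Matrix.det_diagonal]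
    exact Finset.prod_ne_zero_iff.mpr fun m _ =>
      Nat.cast_ne_zero.mpr (Nat.factorial_ne_zero _)
  have h : (μ • (1 : Matrix (Fin s) (Fin s) ℂ) - compM s (gg s c)) * DD
      = DD * (μ • (1 : Matrix (Fin s) (Fin s) ℂ) - NN s c) := by
    rw [Matrix.sub_mul, Matrix.mul_sub, Matrix.smul_mul, one_mul, Matrix.mul_smul, mul_one,
      comp_mul_diag hs]
  have h2 := congrArg Matrix.det h
  rw [Matrix.det_mul, Matrix.det_mul, mul_comm (DD.det) _] at h2
  exact (mul_right_cancel₀ hdet h2).symm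

lemma aeval_tauP (p : Polynomial ℝ) (μ : ℂ) :
    Polynomial.aeval μ (tauP p)
      = ∑ k ∈ p.support, ((k.factorial * p.coeff k : ℝ) : ℂ) * μ ^ k := by
  rw [tauP, map_sum]
  refine Finset.sum_congr rfl fun k _ => ?_
  rw [_root_.map_mul, map_pow, aeval_X, aeval_C]
  rfl

/-- The master identity. -/
lemma master_identity (hs : 1 ≤ s) (hc : StrictMono c) (μ : ℂ) :
    (s.factorial : ℂ) * (μ • (1 : Matrix (Fin s) (Fin s) ℂ) - collocAC s c).det
      = Polynomial.aeval μ (tauP (piPoly s c)) := by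
  rw [det_shift hs hc, det_shift2 hs, det_compM, aeval_tauP]
  have hsub : (piPoly s c).support ⊆ Finset.range (s + 1) := by
    intro k hk
    rw [Finset.mem_range]
    have := Polynomial.le_natDegree_of_mem_supp k hk
    rw [piPoly_natDegree] at this
    omega
  rw [Finset.sum_subset hsub (fun k _ hk => by
    rw [Polynomial.notMem_support_iff.mp hk]
    simp)]
  have hfacne : (s.factorial : ℂ) ≠ 0 :=
    Nat.cast_ne_zero.mpr (Nat.factorial_ne_zero s)
  rw [Finset.sum_range_succ, piPoly_coeff_s]
  rw [mul_add]
  have h1 : (s.factorial : ℂ) * ∑ i : Fin s, gg s c i * μ ^ (i : ℕ)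
      = ∑ k ∈ Finset.range s, ((k.factorial * (piPoly s c).coeff k : ℝ) : ℂ) * μ ^ k := by
    rw [Finset.mul_sum, ← Fin.sum_univ_eq_sum_range
      (fun k => ((k.factorial * (piPoly s c).coeff k : ℝ) : ℂ) * μ ^ k) s]
    refine Finset.sum_congr rfl fun m _ => ?_
    rw [gg]
    push_cast
    field_simp
  rw [h1]
  push_cast
  ring

end midet

section analysis

variable {s : ℕ} {c : Fin s → ℝ}

lemma detAC_ne (hs : 1 ≤ s) (hc : StrictMono c)
    (hroot : ∀ z : ℂ, z.re ≤ 0 → Polynomial.aeval z (tauP (piPoly s c)) ≠ 0)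
    {μ : ℂ} (hμ : μ.re ≤ 0) :
    (μ • (1 : Matrix (Fin s) (Fin s) ℂ) - collocAC s c).det ≠ 0 := by
  intro h
  apply hroot μ hμ
  rw [← master_identity hs hc, h, mul_zero]

lemma one_sub_eq (lam : ℂ) (hlam : lam ≠ 0) :
    (1 : Matrix (Fin s) (Fin s) ℂ) - lam • collocAC s c
      = lam • (lam⁻¹ • (1 : Matrix (Fin s) (Fin s) ℂ) - collocAC s c) := by
  rw [smul_sub, smul_smul, mul_inv_cancel₀ hlam, one_smul]

lemma unit_det (hs : 1 ≤ s) (hc : StrictMono c)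
    (hroot : ∀ z : ℂ, z.re ≤ 0 → Polynomial.aeval z (tauP (piPoly s c)) ≠ 0)
    {lam : ℂ} (hlam : lam.re ≤ 0) :
    IsUnit ((1 : Matrix (Fin s) (Fin s) ℂ) - lam • collocAC s c).det := by
  rw [isUnit_iff_ne_zero]
  rcases eq_or_ne lam 0 with rfl | hne
  · simp
  · rw [one_sub_eq lam hne, Matrix.det_smul]
    have hμre : (lam⁻¹).re ≤ 0 := by
      rw [Complex.inv_re]
      exact div_nonpos_iff.mpr (Or.inr ⟨hlam, Complex.normSq_nonneg lam⟩)
    exact mul_ne_zero (pow_ne_zero _ hne) (detAC_ne hs hc hroot hμre)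

lemma inv_eq_smul_inv (hs : 1 ≤ s) (hc : StrictMono c)
    (hroot : ∀ z : ℂ, z.re ≤ 0 → Polynomial.aeval z (tauP (piPoly s c)) ≠ 0)
    {lam : ℂ} (hlam : lam.re ≤ 0) (hne : lam ≠ 0) :
    ((1 : Matrix (Fin s) (Fin s) ℂ) - lam • collocAC s c)⁻¹
      = lam⁻¹ • (lam⁻¹ • (1 : Matrix (Fin s) (Fin s) ℂ) - collocAC s c)⁻¹ := by
  have hμre : (lam⁻¹).re ≤ 0 := by
    rw [Complex.inv_re]
    exact div_nonpos_iff.mpr (Or.inr ⟨hlam, Complex.normSq_nonneg lam⟩)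
  have hU : IsUnit ((lam⁻¹ • (1 : Matrix (Fin s) (Fin s) ℂ) - collocAC s c)).det :=
    isUnit_iff_ne_zero.mpr (detAC_ne hs hc hroot hμre)
  apply Matrix.inv_eq_right_inv
  rw [one_sub_eq lam hne, Matrix.smul_mul, Matrix.mul_smul, smul_smul,
    mul_inv_cancel₀ hne, one_smul, Matrix.mul_nonsing_inv _ hU]

lemma smul_inv_eq (hs : 1 ≤ s) (hc : StrictMono c)
    (hroot : ∀ z : ℂ, z.re ≤ 0 → Polynomial.aeval z (tauP (piPoly s c)) ≠ 0)
    {lam : ℂ} (hlam : lam.re ≤ 0) (hne : lam ≠ 0) :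
    lam • ((1 : Matrix (Fin s) (Fin s) ℂ) - lam • collocAC s c)⁻¹
      = (lam⁻¹ • (1 : Matrix (Fin s) (Fin s) ℂ) - collocAC s c)⁻¹ := by
  rw [inv_eq_smul_inv hs hc hroot hlam hne, smul_smul, mul_inv_cancel₀ hne, one_smul]

/-- the compact region -/
def KK : Set ℂ := {z : ℂ | z.re ≤ 0} ∩ Metric.closedBall 0 1

lemma KK_compact : IsCompact KK :=
  (isCompact_closedBall (0 : ℂ) 1).inter_left (isClosed_le Complex.continuous_re continuous_const)

lemma KK_nonempty : (KK).Nonempty :=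
  ⟨0, by simp [KK]⟩

lemma bound_G (hs : 1 ≤ s) (hc : StrictMono c)
    (hroot : ∀ z : ℂ, z.re ≤ 0 → Polynomial.aeval z (tauP (piPoly s c)) ≠ 0) :
    ∃ M : ℝ, ∀ μ ∈ KK, ∀ i j : Fin s,
      ‖(μ • (1 : Matrix (Fin s) (Fin s) ℂ) - collocAC s c)⁻¹ i j‖ ≤ M := by
  set A : ℂ → Matrix (Fin s) (Fin s) ℂ :=
    fun μ => μ • (1 : Matrix (Fin s) (Fin s) ℂ) - collocAC s c with hA
  have hAc : Continuous A := (continuous_id.smul continuous_const).sub continuous_const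
  have hF : ContinuousOn (fun μ => ∑ i : Fin s, ∑ j : Fin s, ‖(A μ)⁻¹ i j‖) KK := by
    apply continuousOn_finset_sum
    intro i _
    apply continuousOn_finset_sum
    intro j _
    have hent : ContinuousOn (fun μ => (A μ)⁻¹ i j) KK := by
      have heq : ∀ μ ∈ KK, (A μ)⁻¹ i j = ((A μ).det)⁻¹ * (A μ).adjugate i j := by
        intro μ _
        rw [Matrix.inv_def, Ring.inverse_eq_inv, Matrix.smul_apply, smul_eq_mul]
      refine ContinuousOn.congr ?_ heq
      apply ContinuousOn.mul
      · exact (hAc.matrix_det.continuousOn).inv₀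
          (fun μ hμ => detAC_ne hs hc hroot hμ.1)
      · exact (hAc.matrix_adjugate.matrix_elem i j).continuousOn
    exact continuous_norm.comp_continuousOn hent
  obtain ⟨x, _, hx⟩ := KK_compact.exists_isMaxOn KK_nonempty hF
  refine ⟨∑ i : Fin s, ∑ j : Fin s, ‖(A x)⁻¹ i j‖, fun μ hμ i j => ?_⟩
  have h1 : ‖(A μ)⁻¹ i j‖ ≤ ∑ j' : Fin s, ‖(A μ)⁻¹ i j'‖ :=
    Finset.single_le_sum (f := fun j' => ‖(A μ)⁻¹ i j'‖)
      (fun j' _ => norm_nonneg _) (Finset.mem_univ j)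
  have h2 : ∑ j' : Fin s, ‖(A μ)⁻¹ i j'‖
      ≤ ∑ i' : Fin s, ∑ j' : Fin s, ‖(A μ)⁻¹ i' j'‖ :=
    Finset.single_le_sum (f := fun i' => ∑ j' : Fin s, ‖(A μ)⁻¹ i' j'‖)
      (fun i' _ => Finset.sum_nonneg fun j' _ => norm_nonneg _) (Finset.mem_univ i)
  exact le_trans (le_trans h1 h2) (hx hμ)

lemma bound_H (hs : 1 ≤ s) (hc : StrictMono c)
    (hroot : ∀ z : ℂ, z.re ≤ 0 → Polynomial.aeval z (tauP (piPoly s c)) ≠ 0) :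
    ∃ M : ℝ, ∀ lam ∈ KK, ∀ i j : Fin s,
      ‖((1 : Matrix (Fin s) (Fin s) ℂ) - lam • collocAC s c)⁻¹ i j‖ ≤ M := by
  set A : ℂ → Matrix (Fin s) (Fin s) ℂ :=
    fun lam => (1 : Matrix (Fin s) (Fin s) ℂ) - lam • collocAC s c with hA
  have hAc : Continuous A := continuous_const.sub (continuous_id.smul continuous_const)
  have hdet : ∀ lam ∈ KK, (A lam).det ≠ 0 := fun lam hlam =>
    isUnit_iff_ne_zero.mp (unit_det hs hc hroot hlam.1)
  have hF : ContinuousOn (fun μ => ∑ i : Fin s, ∑ j : Fin s, ‖(A μ)⁻¹ i j‖) KK := by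
    apply continuousOn_finset_sum
    intro i _
    apply continuousOn_finset_sum
    intro j _
    have hent : ContinuousOn (fun μ => (A μ)⁻¹ i j) KK := by
      have heq : ∀ μ ∈ KK, (A μ)⁻¹ i j = ((A μ).det)⁻¹ * (A μ).adjugate i j := by
        intro μ _
        rw [Matrix.inv_def, Ring.inverse_eq_inv, Matrix.smul_apply, smul_eq_mul]
      refine ContinuousOn.congr ?_ heq
      apply ContinuousOn.mul
      · exact (hAc.matrix_det.continuousOn).inv₀ hdet
      · exact (hAc.matrix_adjugate.matrix_elem i j).continuousOn
    exact continuous_norm.comp_continuousOn hent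
  obtain ⟨x, _, hx⟩ := KK_compact.exists_isMaxOn KK_nonempty hF
  refine ⟨∑ i : Fin s, ∑ j : Fin s, ‖(A x)⁻¹ i j‖, fun μ hμ i j => ?_⟩
  have h1 : ‖(A μ)⁻¹ i j‖ ≤ ∑ j' : Fin s, ‖(A μ)⁻¹ i j'‖ :=
    Finset.single_le_sum (f := fun j' => ‖(A μ)⁻¹ i j'‖)
      (fun j' _ => norm_nonneg _) (Finset.mem_univ j)
  have h2 : ∑ j' : Fin s, ‖(A μ)⁻¹ i j'‖
      ≤ ∑ i' : Fin s, ∑ j' : Fin s, ‖(A μ)⁻¹ i' j'‖ :=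
    Finset.single_le_sum (f := fun i' => ∑ j' : Fin s, ‖(A μ)⁻¹ i' j'‖)
      (fun i' _ => Finset.sum_nonneg fun j' _ => norm_nonneg _) (Finset.mem_univ i)
  exact le_trans (le_trans h1 h2) (hx hμ)

end analysis

end

/-- an `A`-stable collocation method such that `τ(π)` has no root in `ℂ⁻`
is `Â`-stable (i.e. `A`-, `AS`- and `ASI`-stable). -/
theorem AStable_of_no_root_hatA (s : ℕ) (hs : 1 ≤ s) (c : Fin s → ℝ) (hc : StrictMono c)
    (hA : AStable s c)
    (hroot : ∀ z : ℂ, z.re ≤ 0 → Polynomial.aeval z (tauP (piPoly s c)) ≠ 0) :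
    AStable s c ∧ ASStable s c ∧ ASIStable s c := by
  obtain ⟨M₁, hM₁⟩ := bound_G hs hc hroot
  obtain ⟨M₂, hM₂⟩ := bound_H hs hc hroot
  have hinvre : ∀ {lam : ℂ}, lam.re ≤ 0 → (lam⁻¹).re ≤ 0 := by
    intro lam hlam
    rw [Complex.inv_re]
    exact div_nonpos_iff.mpr (Or.inr ⟨hlam, Complex.normSq_nonneg lam⟩)
  have hKKmem : ∀ {lam : ℂ}, lam.re ≤ 0 → ‖lam‖ ≤ 1 → lam ∈ KK := by
    intro lam h1 h2
    exact ⟨h1, by simpa [Metric.mem_closedBall, Complex.dist_eq] using h2⟩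
  have hKKinv : ∀ {lam : ℂ}, lam.re ≤ 0 → ¬ ‖lam‖ ≤ 1 → lam⁻¹ ∈ KK := by
    intro lam h1 h2
    refine hKKmem (hinvre h1) ?_
    rw [norm_inv]
    exact inv_le_one_of_one_le₀ (le_of_lt (lt_of_not_ge h2))
  refine ⟨hA, ⟨fun lam h => unit_det hs hc hroot h, ?_⟩,
    ⟨fun lam h => unit_det hs hc hroot h, ?_⟩⟩
  · -- AS bound
    set B := ∑ i : Fin s, ‖collocBC s c i‖ with hB
    refine ⟨max (B * M₁) (B * M₂), fun lam hlam j => ?_⟩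
    have hvec : (collocBC s c ᵥ* (1 - lam • collocAC s c)⁻¹) j
        = ∑ i : Fin s, collocBC s c i * (1 - lam • collocAC s c)⁻¹ i j := rfl
    by_cases hsmall : ‖lam‖ ≤ 1
    · have hmem := hKKmem hlam hsmall
      rw [hvec, norm_mul]
      calc ‖lam‖ * ‖∑ i : Fin s,
              collocBC s c i * (1 - lam • collocAC s c)⁻¹ i j‖
          ≤ 1 * ‖∑ i : Fin s,
              collocBC s c i * (1 - lam • collocAC s c)⁻¹ i j‖ := by
            exact mul_le_mul_of_nonneg_right hsmall (norm_nonneg _)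
        _ = ‖∑ i : Fin s,
              collocBC s c i * (1 - lam • collocAC s c)⁻¹ i j‖ := one_mul _
        _ ≤ ∑ i : Fin s, ‖collocBC s c i * (1 - lam • collocAC s c)⁻¹ i j‖ :=
            norm_sum_le _ _
        _ ≤ ∑ i : Fin s, ‖collocBC s c i‖ * M₂ := by
            refine Finset.sum_le_sum fun i _ => ?_
            rw [norm_mul]
            exact mul_le_mul_of_nonneg_left (hM₂ lam hmem i j) (norm_nonneg _)
        _ = B * M₂ := by rw [← Finset.sum_mul]
        _ ≤ max (B * M₁) (B * M₂) := le_max_right _ _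
    · have hne : lam ≠ 0 := by
        intro h; rw [h] at hsmall; simp at hsmall
      have hmem := hKKinv hlam hsmall
      have hG := smul_inv_eq hs hc hroot hlam hne
      have hSeq : lam * (collocBC s c ᵥ* (1 - lam • collocAC s c)⁻¹) j
          = ∑ i : Fin s, collocBC s c i *
              ((lam⁻¹ • (1 : Matrix (Fin s) (Fin s) ℂ) - collocAC s c)⁻¹ i j) := by
        rw [hvec, Finset.mul_sum]
        refine Finset.sum_congr rfl fun i _ => ?_
        rw [← hG, Matrix.smul_apply, smul_eq_mul]
        ring
      rw [hSeq]
      calc ‖∑ i : Fin s, collocBC s c i *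
              ((lam⁻¹ • (1 : Matrix (Fin s) (Fin s) ℂ) - collocAC s c)⁻¹ i j)‖
          ≤ ∑ i : Fin s, ‖collocBC s c i *
              ((lam⁻¹ • (1 : Matrix (Fin s) (Fin s) ℂ) - collocAC s c)⁻¹ i j)‖ :=
            norm_sum_le _ _
        _ ≤ ∑ i : Fin s, ‖collocBC s c i‖ * M₁ := by
            refine Finset.sum_le_sum fun i _ => ?_
            rw [norm_mul]
            exact mul_le_mul_of_nonneg_left (hM₁ _ hmem i j) (norm_nonneg _)
        _ = B * M₁ := by rw [← Finset.sum_mul]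
        _ ≤ max (B * M₁) (B * M₂) := le_max_left _ _
  · -- ASI bound
    refine ⟨max M₁ M₂, fun lam hlam i j => ?_⟩
    by_cases hsmall : ‖lam‖ ≤ 1
    · exact le_trans (hM₂ lam (hKKmem hlam hsmall) i j) (le_max_right _ _)
    · have hne : lam ≠ 0 := by
        intro h; rw [h] at hsmall; simp at hsmall
      have hmem := hKKinv hlam hsmall
      rw [inv_eq_smul_inv hs hc hroot hlam hne, Matrix.smul_apply, smul_eq_mul, norm_mul]
      have habs : ‖lam⁻¹‖ ≤ 1 := by
        rw [norm_inv]
        exact inv_le_one_of_one_le₀ (le_of_lt (lt_of_not_ge hsmall))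
      calc ‖lam⁻¹‖ *
            ‖(lam⁻¹ • (1 : Matrix (Fin s) (Fin s) ℂ) - collocAC s c)⁻¹ i j‖
          ≤ 1 * M₁ := mul_le_mul habs (hM₁ _ hmem i j) (norm_nonneg _) zero_le_one
        _ = M₁ := one_mul _
        _ ≤ max M₁ M₂ := le_max_left _ _
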